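/- Let φ be a unital positive linear map on C[0,1] sending C[0,1]_α into C[0,1]_β, with μ₀, μ₁ the Borel probability measures representing the evaluations of φ at 0 and 1. Let {X₁,…,Xₙ} be a partition of [0,1] into connected Borel sets with 0 ∈ X₁, 1 ∈ Xₙ. Then μ₀(Xᵢ) = β μ₁(Xᵢ) for i = 2,…,n−1, and α μ₀(X₁) + μ₀(Xₙ) = β (α μ₁(X₁) + μ₁(Xₙ)). -/

import Mathlib

open ContinuousMap MeasureTheory

set_option maxHeartbeats 2000000 in
theorem stmt13 (α β : ℝ) (hα : α ∈ Set.Ioo (0 : ℝ) 1) (hβ : β ∈ Set.Ioo (0 : ℝ) 1)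
    (φ : C(unitInterval, ℝ) →ₗ[ℝ] C(unitInterval, ℝ))
    (hunital : φ 1 = 1)
    (hpos : ∀ f : C(unitInterval, ℝ), (∀ x, 0 ≤ f x) → ∀ x, 0 ≤ φ f x)
    (hsub : ∀ f : C(unitInterval, ℝ), f 0 = α * f 1 → φ f 0 = β * φ f 1)
    (μ₀ μ₁ : Measure unitInterval)
    [IsProbabilityMeasure μ₀] [IsProbabilityMeasure μ₁]
    (hμ₀ : ∀ f : C(unitInterval, ℝ), φ f 0 = ∫ t, f t ∂μ₀)
    (hμ₁ : ∀ f : C(unitInterval, ℝ), φ f 1 = ∫ t, f t ∂μ₁)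
    (n : ℕ) (hn : 2 ≤ n) (X : Fin n → Set unitInterval)
    (hmeas : ∀ i, MeasurableSet (X i))
    (hconn : ∀ i, IsConnected (X i))
    (hdisj : Pairwise (Function.onFun Disjoint X))
    (hcover : ⋃ i, X i = Set.univ)
    (h0 : (0 : unitInterval) ∈ X ⟨0, by omega⟩)
    (h1 : (1 : unitInterval) ∈ X ⟨n - 1, by omega⟩) :
    (∀ i : Fin n, 1 ≤ i.val → i.val ≤ n - 2 →
      (μ₀ (X i)).toReal = β * (μ₁ (X i)).toReal) ∧
    α * (μ₀ (X ⟨0, by omega⟩)).toReal + (μ₀ (X ⟨n - 1, by omega⟩)).toReal =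
      β * (α * (μ₁ (X ⟨0, by omega⟩)).toReal + (μ₁ (X ⟨n - 1, by omega⟩)).toReal) := by
  classical
  obtain ⟨hα0, hα1⟩ := hα
  obtain ⟨hβ0, hβ1⟩ := hβ
  -- The key limit lemma: if continuous functions satisfying the subspace condition
  -- converge boundedly pointwise to g, then ∫ g dμ₀ = β ∫ g dμ₁.
  have key : ∀ (g : unitInterval → ℝ) (F : ℕ → C(unitInterval, ℝ)),
      (∀ k, F k 0 = α * F k 1) → (∀ k x, ‖F k x‖ ≤ 1 + α) →
      (∀ x, Filter.Tendsto (fun k => F k x) Filter.atTop (nhds (g x))) →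
      ∫ x, g x ∂μ₀ = β * ∫ x, g x ∂μ₁ := by
    intro g F hF hbd hlim
    have heq : ∀ k, ∫ x, F k x ∂μ₀ = β * ∫ x, F k x ∂μ₁ := by
      intro k
      rw [← hμ₀, ← hμ₁, hsub _ (hF k)]
    have t0 : Filter.Tendsto (fun k => ∫ x, F k x ∂μ₀) Filter.atTop
        (nhds (∫ x, g x ∂μ₀)) :=
      MeasureTheory.tendsto_integral_of_dominated_convergence (fun _ => 1 + α)
        (fun k => (F k).continuous.aestronglyMeasurable) (integrable_const _)
        (fun k => Filter.Eventually.of_forall (hbd k)) (Filter.Eventually.of_forall hlim)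
    have t1 : Filter.Tendsto (fun k => ∫ x, F k x ∂μ₁) Filter.atTop
        (nhds (∫ x, g x ∂μ₁)) :=
      MeasureTheory.tendsto_integral_of_dominated_convergence (fun _ => 1 + α)
        (fun k => (F k).continuous.aestronglyMeasurable) (integrable_const _)
        (fun k => Filter.Eventually.of_forall (hbd k)) (Filter.Eventually.of_forall hlim)
    have t1' := t1.const_mul β
    rw [show (fun k => ∫ x, F k x ∂μ₀) = fun k => β * ∫ x, F k x ∂μ₁ from funext heq] at t0
    exact tendsto_nhds_unique t0 t1'
  have indrel : ∀ (A : Set unitInterval), MeasurableSet A →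
      (∫ x, A.indicator 1 x ∂μ₀ = β * ∫ x, A.indicator 1 x ∂μ₁) →
      (μ₀ A).toReal = β * (μ₁ A).toReal := by
    intro A hA h
    rwa [MeasureTheory.integral_indicator_one hA, MeasureTheory.integral_indicator_one hA] at h
  -- additivity of toReal measures
  have addR : ∀ (μ : Measure unitInterval) (_ : IsFiniteMeasure μ)
      (A B : Set unitInterval), MeasurableSet B → Disjoint A B →
      (μ (A ∪ B)).toReal = (μ A).toReal + (μ B).toReal := by
    intro μ hf A B hB hd
    haveI := hf
    rw [measure_union hd hB, ENNReal.toReal_add (measure_ne_top μ A) (measure_ne_top μ B)]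
  -- the relation for preimages of closed intervals inside (0,1)
  have nu_Icc : ∀ c d : ℝ, 0 < c → d < 1 →
      (μ₀ (Subtype.val ⁻¹' Set.Icc c d)).toReal
        = β * (μ₁ (Subtype.val ⁻¹' Set.Icc c d)).toReal := by
    intro c d hc hd
    rcases le_or_gt c d with hcd | hcd
    swap
    · have he : Subtype.val ⁻¹' Set.Icc c d = (∅ : Set unitInterval) := by
        rw [Set.Icc_eq_empty (not_le.2 hcd)]; simp
      rw [he]; simp
    set S := Set.Icc c d with hSdef
    have hSne : S.Nonempty := Set.nonempty_Icc.2 hcd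
    have hSclosed : IsClosed S := isClosed_Icc
    have hAmeas : MeasurableSet (Subtype.val ⁻¹' S) :=
      (measurable_subtype_coe : Measurable (Subtype.val : unitInterval → ℝ)) measurableSet_Icc
    set m : ℝ := min c (1 - d) with hm
    have hm0 : 0 < m := lt_min hc (by linarith)
    set F : ℕ → C(unitInterval, ℝ) := fun k =>
      ⟨fun x => max 0 (1 - (((k : ℝ) + 1)/m) * Metric.infDist (x : ℝ) S), by
        exact continuous_const.max (continuous_const.sub (continuous_const.mul
          ((Metric.continuous_infDist_pt S).comp continuous_subtype_val)))⟩ with hFdef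
    have hinf0 : ∀ x : unitInterval, (x : ℝ) ∉ S → m ≤ Metric.infDist (x : ℝ) S → True :=
      fun _ _ _ => trivial
    -- value of F at points far from S
    have hfar : ∀ (k : ℕ) (x : unitInterval), m ≤ Metric.infDist (x : ℝ) S → F k x = 0 := by
      intro k x hx
      have h1 : (1 : ℝ) ≤ (((k : ℝ) + 1)/m) * Metric.infDist (x : ℝ) S := by
        have hk : (1 : ℝ) ≤ (k : ℝ) + 1 := by
          have := Nat.cast_nonneg (α := ℝ) k; linarith
        rw [div_mul_eq_mul_div, le_div_iff₀ hm0]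
        nlinarith [Metric.infDist_nonneg (x := (x : ℝ)) (s := S)]
      simp only [hFdef, ContinuousMap.coe_mk]
      exact max_eq_left (by linarith)
    have hF0 : ∀ k, F k 0 = α * F k 1 := by
      intro k
      have e0 : F k 0 = 0 := by
        apply hfar
        by_contra h
        push_neg at h
        obtain ⟨y, hy, hy2⟩ := (Metric.infDist_lt_iff hSne).1 h
        have : dist ((0 : unitInterval) : ℝ) y = y := by
          rw [Real.dist_eq]
          rw [show (((0 : unitInterval)) : ℝ) = 0 from rfl]
          rw [abs_sub_comm, sub_zero, abs_of_nonneg (by linarith [hy.1] : (0:ℝ) ≤ y)]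
        rw [this] at hy2
        have := hy.1
        have := min_le_left c (1 - d)
        linarith
      have e1 : F k 1 = 0 := by
        apply hfar
        by_contra h
        push_neg at h
        obtain ⟨y, hy, hy2⟩ := (Metric.infDist_lt_iff hSne).1 h
        have : dist ((1 : unitInterval) : ℝ) y = 1 - y := by
          rw [Real.dist_eq, show (((1 : unitInterval)) : ℝ) = 1 from rfl,
            abs_of_nonneg (by linarith [hy.2] : (0:ℝ) ≤ 1 - y)]
        rw [this] at hy2
        have := hy.2
        have := min_le_right c (1 - d)
        linarith
      rw [e0, e1, mul_zero]
    have hFbd : ∀ k x, ‖F k x‖ ≤ 1 + α := by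
      intro k x
      simp only [hFdef, ContinuousMap.coe_mk]
      rw [Real.norm_eq_abs, abs_le]
      constructor
      · have := le_max_left (0:ℝ) (1 - (((k : ℝ) + 1)/m) * Metric.infDist (x : ℝ) S)
        linarith
      · have h2 : 0 ≤ (((k : ℝ) + 1)/m) * Metric.infDist (x : ℝ) S :=
          mul_nonneg (by positivity) Metric.infDist_nonneg
        exact max_le (by linarith) (by linarith)
    have hFlim : ∀ x : unitInterval, Filter.Tendsto (fun k => F k x) Filter.atTop
        (nhds ((Subtype.val ⁻¹' S).indicator (1 : unitInterval → ℝ) x)) := by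
      intro x
      by_cases hx : (x : ℝ) ∈ S
      · have : ∀ k, F k x = 1 := by
          intro k
          simp only [hFdef, ContinuousMap.coe_mk, Metric.infDist_zero_of_mem hx]
          simp
        rw [Set.indicator_of_mem (by exact hx) ]
        simp only [Pi.one_apply]
        rw [show (fun k => F k x) = fun _ => (1:ℝ) from funext this]
        exact tendsto_const_nhds
      · have hpos' : 0 < Metric.infDist (x : ℝ) S :=
          (hSclosed.notMem_iff_infDist_pos hSne).1 hx
        rw [Set.indicator_of_notMem (by exact hx)]
        have hev : ∀ᶠ k in Filter.atTop, F k x = 0 := by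
          filter_upwards [Filter.eventually_ge_atTop ⌈m / Metric.infDist (x : ℝ) S⌉₊]
            with k hk
          simp only [hFdef, ContinuousMap.coe_mk]
          apply max_eq_left
          have h1 : m / Metric.infDist (x : ℝ) S ≤ (k : ℝ) :=
            le_trans (Nat.le_ceil _) (by exact_mod_cast hk)
          have h2 : m ≤ (k : ℝ) * Metric.infDist (x : ℝ) S := by
            rwa [div_le_iff₀ hpos'] at h1
          have h3 : (1 : ℝ) ≤ (((k : ℝ) + 1)/m) * Metric.infDist (x : ℝ) S := by
            rw [div_mul_eq_mul_div, le_div_iff₀ hm0]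
            nlinarith
          linarith
        exact Filter.Tendsto.congr' (by filter_upwards [hev] with k hk; exact hk.symm)
          tendsto_const_nhds
    exact indrel _ hAmeas (key _ F hF0 hFbd hFlim)
  -- singletons in the open interval
  have nu_single : ∀ p : unitInterval, 0 < (p : ℝ) → (p : ℝ) < 1 →
      (μ₀ ({p} : Set unitInterval)).toReal = β * (μ₁ ({p} : Set unitInterval)).toReal := by
    intro p hp0 hp1
    have : ({p} : Set unitInterval) = Subtype.val ⁻¹' Set.Icc (p : ℝ) (p : ℝ) := by
      ext q
      simp [Set.Icc_self, Subtype.ext_iff, eq_comm]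
    rw [this]
    exact nu_Icc _ _ hp0 hp1
  -- preimages of open intervals
  have nu_Ioo : ∀ a b : ℝ, 0 ≤ a → b ≤ 1 →
      (μ₀ (Subtype.val ⁻¹' Set.Ioo a b)).toReal
        = β * (μ₁ (Subtype.val ⁻¹' Set.Ioo a b)).toReal := by
    intro a b ha hb
    set T : Set ℝ := (Set.Ioo a b)ᶜ with hTdef
    have hTclosed : IsClosed T := isOpen_Ioo.isClosed_compl
    have h0T : (0 : ℝ) ∈ T := by
      intro h
      exact absurd h.1 (not_lt.2 ha)
    have h1T : (1 : ℝ) ∈ T := by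
      intro h
      exact absurd h.2 (not_lt.2 hb)
    have hTne : T.Nonempty := ⟨0, h0T⟩
    have hAmeas : MeasurableSet (Subtype.val ⁻¹' Set.Ioo a b) :=
      (measurable_subtype_coe : Measurable (Subtype.val : unitInterval → ℝ)) measurableSet_Ioo
    set F : ℕ → C(unitInterval, ℝ) := fun k =>
      ⟨fun x => min 1 (((k : ℝ) + 1) * Metric.infDist (x : ℝ) T), by
        exact continuous_const.min (continuous_const.mul
          ((Metric.continuous_infDist_pt T).comp continuous_subtype_val))⟩ with hFdef
    have hF0 : ∀ k, F k 0 = α * F k 1 := by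
      intro k
      have e0 : F k 0 = 0 := by
        simp only [hFdef, ContinuousMap.coe_mk]
        rw [show (((0 : unitInterval)) : ℝ) = 0 from rfl, Metric.infDist_zero_of_mem h0T]
        simp
      have e1 : F k 1 = 0 := by
        simp only [hFdef, ContinuousMap.coe_mk]
        rw [show (((1 : unitInterval)) : ℝ) = 1 from rfl, Metric.infDist_zero_of_mem h1T]
        simp
      rw [e0, e1, mul_zero]
    have hFbd : ∀ k x, ‖F k x‖ ≤ 1 + α := by
      intro k x
      simp only [hFdef, ContinuousMap.coe_mk]
      rw [Real.norm_eq_abs, abs_le]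
      constructor
      · have : (0:ℝ) ≤ min 1 (((k : ℝ) + 1) * Metric.infDist (x : ℝ) T) :=
          le_min (by norm_num) (mul_nonneg (by positivity) Metric.infDist_nonneg)
        linarith
      · have := min_le_left (1:ℝ) (((k : ℝ) + 1) * Metric.infDist (x : ℝ) T)
        linarith
    have hFlim : ∀ x : unitInterval, Filter.Tendsto (fun k => F k x) Filter.atTop
        (nhds ((Subtype.val ⁻¹' Set.Ioo a b).indicator (1 : unitInterval → ℝ) x)) := by
      intro x
      by_cases hx : (x : ℝ) ∈ Set.Ioo a b
      · have hxT : (x : ℝ) ∉ T := by simp [hTdef, hx]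
        have hpos' : 0 < Metric.infDist (x : ℝ) T :=
          (hTclosed.notMem_iff_infDist_pos hTne).1 hxT
        rw [Set.indicator_of_mem (by exact hx)]
        simp only [Pi.one_apply]
        have hev : ∀ᶠ k in Filter.atTop, F k x = 1 := by
          filter_upwards [Filter.eventually_ge_atTop ⌈1 / Metric.infDist (x : ℝ) T⌉₊]
            with k hk
          simp only [hFdef, ContinuousMap.coe_mk]
          apply min_eq_left
          have h1 : 1 / Metric.infDist (x : ℝ) T ≤ (k : ℝ) :=
            le_trans (Nat.le_ceil _) (by exact_mod_cast hk)
          have h2 : 1 ≤ (k : ℝ) * Metric.infDist (x : ℝ) T := by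
            rwa [div_le_iff₀ hpos'] at h1
          nlinarith
        exact Filter.Tendsto.congr' (by filter_upwards [hev] with k hk; exact hk.symm)
          tendsto_const_nhds
      · have hxT : (x : ℝ) ∈ T := hx
        rw [Set.indicator_of_notMem (by exact hx)]
        have : ∀ k, F k x = 0 := by
          intro k
          simp only [hFdef, ContinuousMap.coe_mk, Metric.infDist_zero_of_mem hxT]
          simp
        rw [show (fun k => F k x) = fun _ => (0:ℝ) from funext this]
        exact tendsto_const_nhds
    exact indrel _ hAmeas (key _ F hF0 hFbd hFlim)
  -- sets contained in a pair of interior points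
  have nu_pair : ∀ (E : Set unitInterval) (p q : unitInterval), MeasurableSet E →
      E ⊆ {p, q} → (∀ r ∈ E, 0 < (r : ℝ) ∧ (r : ℝ) < 1) →
      (μ₀ E).toReal = β * (μ₁ E).toReal := by
    intro E p q hEmeas hEsub hEint
    by_cases hp : p ∈ E <;> by_cases hq : q ∈ E
    · have hE : E = {p, q} := by
        apply Set.Subset.antisymm hEsub
        rw [Set.insert_subset_iff]
        exact ⟨hp, Set.singleton_subset_iff.2 hq⟩
      rcases eq_or_ne p q with rfl | hpq
      · rw [hE, Set.pair_eq_singleton]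
        exact nu_single p (hEint p hp).1 (hEint p hp).2
      · have hd : Disjoint ({p} : Set unitInterval) {q} := by
          simp [Set.disjoint_singleton, hpq]
        have h1 := addR μ₀ inferInstance {p} {q} (measurableSet_singleton q) hd
        have h2 := addR μ₁ inferInstance {p} {q} (measurableSet_singleton q) hd
        rw [Set.singleton_union] at h1 h2
        rw [hE, h1, h2, mul_add,
          nu_single p (hEint p hp).1 (hEint p hp).2,
          nu_single q (hEint q hq).1 (hEint q hq).2]
    · have hE : E = {p} := by
        apply Set.Subset.antisymm
        · intro r hr
          rcases hEsub hr with rfl | hr'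
          · rfl
          · exact absurd hr (by rw [Set.mem_singleton_iff.1 hr']; exact hq)
        · exact Set.singleton_subset_iff.2 hp
      rw [hE]
      exact nu_single p (hEint p hp).1 (hEint p hp).2
    · have hE : E = {q} := by
        apply Set.Subset.antisymm
        · intro r hr
          rcases hEsub hr with rfl | hr'
          · exact absurd hr hp
          · exact hr'
        · exact Set.singleton_subset_iff.2 hq
      rw [hE]
      exact nu_single q (hEint q hq).1 (hEint q hq).2
    · have hE : E = ∅ := by
        apply Set.eq_empty_iff_forall_notMem.2
        intro r hr
        rcases hEsub hr with rfl | hr'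
        · exact hp hr
        · exact hq (by rwa [Set.mem_singleton_iff.1 hr'] at hr)
      rw [hE]; simp
  -- the main structural lemma for connected sets
  have main : ∀ (c : unitInterval), (∀ a b : ℝ, 0 ≤ a → b ≤ 1 → (c : ℝ) ∉ Set.Ioo a b) →
      ∀ (A : Set unitInterval), MeasurableSet A → IsConnected A →
      (∀ r ∈ A, r ≠ c → 0 < (r : ℝ) ∧ (r : ℝ) < 1) →
      (μ₀ A).toReal - β * (μ₁ A).toReal
        = (μ₀ (A ∩ {c})).toReal - β * (μ₁ (A ∩ {c})).toReal := by
    intro c hc A hA hconnA hint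
    set S : Set ℝ := Subtype.val '' A with hSdef
    have hSconn : IsConnected S := hconnA.image _ continuous_subtype_val.continuousOn
    have hSne : S.Nonempty := hSconn.nonempty
    have hSsub : S ⊆ Set.Icc 0 1 := by
      rintro _ ⟨x, hx, rfl⟩; exact x.2
    have hbddb : BddBelow S := ⟨0, fun y hy => (hSsub hy).1⟩
    have hbdda : BddAbove S := ⟨1, fun y hy => (hSsub hy).2⟩
    set a := sInf S with hadef
    set b := sSup S with hbdef
    have hab : a ≤ b := csInf_le_csSup hSne hbddb hbdda
    have ha0 : 0 ≤ a := le_csInf hSne fun y hy => (hSsub hy).1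
    have hb1 : b ≤ 1 := csSup_le hSne fun y hy => (hSsub hy).2
    have ha1 : a ≤ 1 := le_trans hab hb1
    have hb0 : 0 ≤ b := le_trans ha0 hab
    have hIoo : Set.Ioo a b ⊆ S := hSconn.Ioo_csInf_csSup_subset hbddb hbdda
    have hpre : Subtype.val ⁻¹' S = A := Subtype.val_injective.preimage_image A
    set P : Set unitInterval := Subtype.val ⁻¹' Set.Ioo a b with hPdef
    have hPA : P ⊆ A := by
      rw [← hpre]; exact Set.preimage_mono hIoo
    have hPmeas : MeasurableSet P := (measurable_subtype_coe : Measurable (Subtype.val : unitInterval → ℝ)) measurableSet_Ioo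
    set E : Set unitInterval := A \ P with hEdef
    have hEmeas : MeasurableSet E := hA.diff hPmeas
    have hAPE : A = P ∪ E := (Set.union_diff_cancel hPA).symm
    have hPE : Disjoint P E := disjoint_sdiff_self_right
    set pa : unitInterval := ⟨a, ha0, ha1⟩ with hpa
    set pb : unitInterval := ⟨b, hb0, hb1⟩ with hpb
    have hEsub : E ⊆ {pa, pb} := by
      rintro r ⟨hrA, hrP⟩
      have hrS : (r : ℝ) ∈ S := ⟨r, hrA, rfl⟩
      have hle1 : a ≤ (r : ℝ) := csInf_le hbddb hrS
      have hle2 : (r : ℝ) ≤ b := le_csSup hbdda hrS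
      have hnot : ¬((a < (r : ℝ)) ∧ ((r : ℝ) < b)) := fun h => hrP (Set.mem_preimage.2 h)
      push_neg at hnot
      rcases lt_or_eq_of_le hle1 with h | h
      · have hrb : (r : ℝ) = b := le_antisymm hle2 (hnot h)
        exact Set.mem_insert_iff.2 (Or.inr (Set.mem_singleton_iff.2 (Subtype.ext hrb)))
      · exact Set.mem_insert_iff.2 (Or.inl (Subtype.ext h.symm))
    have hcP : c ∉ P := fun h => hc a b ha0 hb1 h
    have hEc : E ∩ {c} = A ∩ {c} := by
      ext r
      simp only [hEdef, Set.mem_inter_iff, Set.mem_diff, Set.mem_singleton_iff]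
      constructor
      · rintro ⟨⟨h1', _⟩, h2'⟩; exact ⟨h1', h2'⟩
      · rintro ⟨h1', rfl⟩; exact ⟨⟨h1', hcP⟩, rfl⟩
    have hP0 : (μ₀ P).toReal = β * (μ₁ P).toReal := nu_Ioo a b ha0 hb1
    have hE1meas : MeasurableSet (E ∩ {c}) := hEmeas.inter (measurableSet_singleton c)
    have hE2meas : MeasurableSet (E \ {c}) := hEmeas.diff (measurableSet_singleton c)
    have hE12 : Disjoint (E ∩ {c}) (E \ {c}) :=
      disjoint_sdiff_self_right.mono_left Set.inter_subset_right
    have hEdecomp : E = (E ∩ {c}) ∪ (E \ {c}) := (Set.inter_union_diff E {c}).symm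
    have hE2 : (μ₀ (E \ {c})).toReal = β * (μ₁ (E \ {c})).toReal := by
      apply nu_pair _ pa pb hE2meas
      · exact fun r hr => hEsub hr.1
      · rintro r ⟨hrE, hrc⟩
        exact hint r hrE.1 hrc
    have a0 := addR μ₀ inferInstance P E hEmeas hPE
    have a1 := addR μ₁ inferInstance P E hEmeas hPE
    rw [← hAPE] at a0 a1
    have b0 := addR μ₀ inferInstance (E ∩ {c}) (E \ {c}) hE2meas hE12
    have b1 := addR μ₁ inferInstance (E ∩ {c}) (E \ {c}) hE2meas hE12
    rw [← hEdecomp] at b0 b1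
    rw [← hEc]
    rw [a0, a1, b0, b1]
    linarith
  -- hypotheses for c = 0 and c = 1
  have hc0 : ∀ a b : ℝ, 0 ≤ a → b ≤ 1 → ((0 : unitInterval) : ℝ) ∉ Set.Ioo a b := by
    intro a b ha hb h
    rw [show (((0 : unitInterval)) : ℝ) = 0 from rfl] at h
    exact absurd h.1 (not_lt.2 ha)
  have hc1 : ∀ a b : ℝ, 0 ≤ a → b ≤ 1 → ((1 : unitInterval) : ℝ) ∉ Set.Ioo a b := by
    intro a b ha hb h
    rw [show (((1 : unitInterval)) : ℝ) = 1 from rfl] at h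
    exact absurd h.2 (not_lt.2 hb)
  have hi0N : (⟨0, by omega⟩ : Fin n) ≠ ⟨n - 1, by omega⟩ := by
    intro h
    rw [Fin.ext_iff] at h
    simp at h
    omega
  have h1not : (1 : unitInterval) ∉ X ⟨0, by omega⟩ := by
    intro h
    exact Set.disjoint_left.1 (hdisj hi0N) h h1
  have h0not : (0 : unitInterval) ∉ X ⟨n - 1, by omega⟩ := by
    intro h
    exact Set.disjoint_left.1 (hdisj hi0N.symm) h h0
  have hne01 : ∀ r : unitInterval, r ≠ 0 → 0 < (r : ℝ) := by
    intro r hr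
    rcases lt_or_eq_of_le r.2.1 with h | h
    · exact h
    · exact absurd (Subtype.ext h.symm : r = 0) hr
  have hne11 : ∀ r : unitInterval, r ≠ 1 → (r : ℝ) < 1 := by
    intro r hr
    rcases lt_or_eq_of_le r.2.2 with h | h
    · exact h
    · exact absurd (Subtype.ext h : r = 1) hr
  constructor
  · -- middle sets
    intro i h1i h2i
    have hi0 : i ≠ ⟨0, by omega⟩ := by
      intro h; rw [Fin.ext_iff] at h; simp at h; omega
    have hiN : i ≠ ⟨n - 1, by omega⟩ := by
      intro h; rw [Fin.ext_iff] at h; simp at h; omega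
    have h0X : (0 : unitInterval) ∉ X i := by
      intro h
      exact Set.disjoint_left.1 (hdisj hi0) h h0
    have h1X : (1 : unitInterval) ∉ X i := by
      intro h
      exact Set.disjoint_left.1 (hdisj hiN) h h1
    have e := main 0 hc0 (X i) (hmeas i) (hconn i) (by
      intro r hr hrne
      refine ⟨hne01 r hrne, hne11 r ?_⟩
      intro h; rw [h] at hr; exact h1X hr)
    have hinter : X i ∩ {(0 : unitInterval)} = ∅ := by
      rw [Set.inter_singleton_eq_empty]
      exact h0X
    rw [hinter] at e
    simp at e
    linarith
  · -- the end sets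
    have e1 := main 0 hc0 (X ⟨0, by omega⟩) (hmeas _) (hconn _) (by
      intro r hr hrne
      refine ⟨hne01 r hrne, hne11 r ?_⟩
      intro h; rw [h] at hr; exact h1not hr)
    have e2 := main 1 hc1 (X ⟨n - 1, by omega⟩) (hmeas _) (hconn _) (by
      intro r hr hrne
      refine ⟨hne01 r ?_, hne11 r hrne⟩
      intro h; rw [h] at hr; exact h0not hr)
    have hin1 : X ⟨0, by omega⟩ ∩ {(0 : unitInterval)} = {(0 : unitInterval)} :=
      Set.inter_eq_right.2 (Set.singleton_subset_iff.2 h0)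
    have hin2 : X ⟨n - 1, by omega⟩ ∩ {(1 : unitInterval)} = {(1 : unitInterval)} :=
      Set.inter_eq_right.2 (Set.singleton_subset_iff.2 h1)
    rw [hin1] at e1
    rw [hin2] at e2
    -- the endpoint relation
    have e3 : α * (μ₀ ({(0 : unitInterval)} : Set unitInterval)).toReal
          + (μ₀ ({(1 : unitInterval)} : Set unitInterval)).toReal
        = β * (α * (μ₁ ({(0 : unitInterval)} : Set unitInterval)).toReal
          + (μ₁ ({(1 : unitInterval)} : Set unitInterval)).toReal) := by
      set g : unitInterval → ℝ := fun x =>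
        α * Set.indicator ({(0 : unitInterval)} : Set unitInterval) 1 x
          + Set.indicator ({(1 : unitInterval)} : Set unitInterval) 1 x with hgdef
      set F : ℕ → C(unitInterval, ℝ) := fun k =>
        ⟨fun x => α * max 0 (1 - ((k : ℝ) + 1) * (x : ℝ))
            + max 0 (1 - ((k : ℝ) + 1) * (1 - (x : ℝ))), by
          apply Continuous.add
          · exact continuous_const.mul (continuous_const.max (continuous_const.sub
              (continuous_const.mul continuous_subtype_val)))
          · exact continuous_const.max (continuous_const.sub (continuous_const.mul
              (continuous_const.sub continuous_subtype_val)))⟩ with hFdef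
      have hk1 : ∀ k : ℕ, (1 : ℝ) ≤ (k : ℝ) + 1 := by
        intro k; have := Nat.cast_nonneg (α := ℝ) k; linarith
      have hFat0 : ∀ k, F k 0 = α := by
        intro k
        simp only [hFdef, ContinuousMap.coe_mk]
        rw [show (((0 : unitInterval)) : ℝ) = 0 from rfl]
        rw [max_eq_left (by linarith [hk1 k] : 1 - ((k : ℝ) + 1) * (1 - 0) ≤ 0)]
        rw [max_eq_right (by linarith : (0:ℝ) ≤ 1 - ((k : ℝ) + 1) * 0)]
        ring
      have hFat1 : ∀ k, F k 1 = 1 := by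
        intro k
        simp only [hFdef, ContinuousMap.coe_mk]
        rw [show (((1 : unitInterval)) : ℝ) = 1 from rfl]
        rw [max_eq_left (by linarith [hk1 k] : 1 - ((k : ℝ) + 1) * 1 ≤ 0)]
        rw [max_eq_right (by norm_num : (0:ℝ) ≤ 1 - ((k : ℝ) + 1) * (1 - 1))]
        ring
      have hF0 : ∀ k, F k 0 = α * F k 1 := by
        intro k; rw [hFat0, hFat1, mul_one]
      have hFbd : ∀ k x, ‖F k x‖ ≤ 1 + α := by
        intro k x
        simp only [hFdef, ContinuousMap.coe_mk]
        have m1 : (0:ℝ) ≤ max 0 (1 - ((k : ℝ) + 1) * (x : ℝ)) := le_max_left _ _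
        have m2 : (0:ℝ) ≤ max 0 (1 - ((k : ℝ) + 1) * (1 - (x : ℝ))) := le_max_left _ _
        have m3 : max 0 (1 - ((k : ℝ) + 1) * (x : ℝ)) ≤ 1 := by
          apply max_le (by norm_num)
          have : (0:ℝ) ≤ ((k : ℝ) + 1) * (x : ℝ) :=
            mul_nonneg (by positivity) x.2.1
          linarith
        have m4 : max 0 (1 - ((k : ℝ) + 1) * (1 - (x : ℝ))) ≤ 1 := by
          apply max_le (by norm_num)
          have : (0:ℝ) ≤ ((k : ℝ) + 1) * (1 - (x : ℝ)) :=
            mul_nonneg (by positivity) (by linarith [x.2.2])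
          linarith
        rw [Real.norm_eq_abs, abs_le]
        constructor
        · nlinarith
        · nlinarith
      have hFlim : ∀ x : unitInterval, Filter.Tendsto (fun k => F k x) Filter.atTop
          (nhds (g x)) := by
        intro x
        rcases eq_or_ne x 0 with rfl | hx0
        · have : g 0 = α := by
            simp only [hgdef]
            rw [Set.indicator_of_mem (Set.mem_singleton _),
              Set.indicator_of_notMem (by
                simp only [Set.mem_singleton_iff]
                intro h
                exact (by norm_num : ((0:unitInterval):ℝ) ≠ ((1:unitInterval):ℝ))
                  (congrArg _ h))]
            simp
          rw [this]
          rw [show (fun k => F k 0) = fun _ => α from funext hFat0]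
          exact tendsto_const_nhds
        rcases eq_or_ne x 1 with rfl | hx1
        · have : g 1 = 1 := by
            simp only [hgdef]
            rw [Set.indicator_of_mem (Set.mem_singleton _),
              Set.indicator_of_notMem (by
                simp only [Set.mem_singleton_iff]
                intro h
                exact (by norm_num : ((1:unitInterval):ℝ) ≠ ((0:unitInterval):ℝ))
                  (congrArg _ h))]
            simp
          rw [this]
          rw [show (fun k => F k 1) = fun _ => (1:ℝ) from funext hFat1]
          exact tendsto_const_nhds
        · have hx0' : 0 < (x : ℝ) := hne01 x hx0
          have hx1' : (x : ℝ) < 1 := hne11 x hx1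
          have hg : g x = 0 := by
            simp only [hgdef]
            rw [Set.indicator_of_notMem (by simpa using hx0),
              Set.indicator_of_notMem (by simpa using hx1)]
            simp
          rw [hg]
          have hev : ∀ᶠ k in Filter.atTop, F k x = 0 := by
            filter_upwards [Filter.eventually_ge_atTop ⌈1 / (x : ℝ)⌉₊,
              Filter.eventually_ge_atTop ⌈1 / (1 - (x : ℝ))⌉₊] with k hk1' hk2'
            simp only [hFdef, ContinuousMap.coe_mk]
            have q1 : 1 / (x : ℝ) ≤ (k : ℝ) :=
              le_trans (Nat.le_ceil _) (by exact_mod_cast hk1')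
            have q2 : 1 / (1 - (x : ℝ)) ≤ (k : ℝ) :=
              le_trans (Nat.le_ceil _) (by exact_mod_cast hk2')
            have r1 : (1:ℝ) ≤ (k : ℝ) * (x : ℝ) := by
              rwa [div_le_iff₀ hx0'] at q1
            have r2 : (1:ℝ) ≤ (k : ℝ) * (1 - (x : ℝ)) := by
              rwa [div_le_iff₀ (by linarith)] at q2
            rw [max_eq_left (by nlinarith), max_eq_left (by nlinarith)]
            ring
          exact Filter.Tendsto.congr' (by filter_upwards [hev] with k hk; exact hk.symm)
            tendsto_const_nhds
      have hkey := key g F hF0 hFbd hFlim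
      have hint0 : Integrable (fun x : unitInterval =>
          Set.indicator ({(0 : unitInterval)} : Set unitInterval) (1 : unitInterval → ℝ) x) μ₀ :=
        (integrable_const (1:ℝ)).indicator (measurableSet_singleton _)
      have hint1 : Integrable (fun x : unitInterval =>
          Set.indicator ({(1 : unitInterval)} : Set unitInterval) (1 : unitInterval → ℝ) x) μ₀ :=
        (integrable_const (1:ℝ)).indicator (measurableSet_singleton _)
      have hint0' : Integrable (fun x : unitInterval =>
          Set.indicator ({(0 : unitInterval)} : Set unitInterval) (1 : unitInterval → ℝ) x) μ₁ :=
        (integrable_const (1:ℝ)).indicator (measurableSet_singleton _)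
      have hint1' : Integrable (fun x : unitInterval =>
          Set.indicator ({(1 : unitInterval)} : Set unitInterval) (1 : unitInterval → ℝ) x) μ₁ :=
        (integrable_const (1:ℝ)).indicator (measurableSet_singleton _)
      have expand : ∀ (μ : Measure unitInterval),
          Integrable (fun x : unitInterval =>
            Set.indicator ({(0 : unitInterval)} : Set unitInterval) (1 : unitInterval → ℝ) x) μ →
          Integrable (fun x : unitInterval =>
            Set.indicator ({(1 : unitInterval)} : Set unitInterval) (1 : unitInterval → ℝ) x) μ →
          ∫ x, g x ∂μ = α * (μ ({(0 : unitInterval)} : Set unitInterval)).toReal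
            + (μ ({(1 : unitInterval)} : Set unitInterval)).toReal := by
        intro μ hi0' hi1'
        simp only [hgdef]
        rw [MeasureTheory.integral_add (hi0'.const_mul α) hi1',
          MeasureTheory.integral_const_mul,
          MeasureTheory.integral_indicator_one (measurableSet_singleton _),
          MeasureTheory.integral_indicator_one (measurableSet_singleton _)]
        rfl
      rw [expand μ₀ hint0 hint1, expand μ₁ hint0' hint1'] at hkey
      exact hkey
    linear_combination α * e1 + e2 + e3
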